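/- Let X ⊆ ℂⁿ be a compact polynomially convex set. For z ∈ X let ε_z : B(X) → ℂ denote evaluation at z, ε_z(f) = f(z), which is a character of B(X). Then the map z ↦ ε_z is a homeomorphism from X onto the character space of B(X); in particular, every character of B(X) is evaluation at a unique point of X. -/

import Mathlib

set_option synthInstance.maxHeartbeats 400000
set_option maxHeartbeats 1000000

/-- A compact set `K ⊆ ℂⁿ` is polynomially convex if it contains every point `w ∈ ℂⁿ`
such that `|p w| ≤ sup_{z ∈ K} |p z|` for every complex polynomial `p`. -/
def IsPolyConvex {n : ℕ} (K : Set (Fin n → ℂ)) : Prop :=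
  ∀ w : Fin n → ℂ,
    (∀ p : MvPolynomial (Fin n) ℂ,
      ‖MvPolynomial.eval w p‖ ≤ ⨆ z : K, ‖MvPolynomial.eval (z : Fin n → ℂ) p‖) →
    w ∈ K

/-- For a compact set `X ⊆ ℂⁿ`, `BX X hX` is the Banach algebra `B(X)`: the closure in
`C(X, ℂ)` (with the supremum norm) of the subalgebra of restrictions to `X` of complex
polynomial functions. -/
noncomputable def BX {ι : Type*} [Fintype ι] (X : Set (ι → ℂ)) (hX : IsCompact X) :
    Subalgebra ℂ C(X, ℂ) :=
  haveI : CompactSpace X := isCompact_iff_compactSpace.mp hX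
  ((MvPolynomial.aeval
      (fun i => ⟨fun z => (z : ι → ℂ) i,
        (continuous_apply i).comp continuous_subtype_val⟩ : ι → C(X, ℂ))).range).topologicalClosure

/-- **The Gelfand spectrum of `B(X)`.** For a compact polynomially convex set `X ⊆ ℂⁿ`,
the map sending `z ∈ X` to the evaluation character `ε_z : B(X) → ℂ`, `ε_z f = f z`, is
a homeomorphism from `X` onto the character space of `B(X)`; in particular every
character of `B(X)` is evaluation at a unique point of `X`. -/
theorem BX_characterSpace_homeo
    {n : ℕ} (X : Set (Fin n → ℂ)) (hX : IsCompact X) (hpc : IsPolyConvex X) :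
    ∃ e : X ≃ₜ WeakDual.characterSpace ℂ (BX X hX),
      ∀ (z : X) (f : BX X hX), (e z : WeakDual ℂ (BX X hX)) f = (f : C(X, ℂ)) z := by
  haveI : CompactSpace X := isCompact_iff_compactSpace.mp hX
  -- the coordinate functions in C(X, ℂ)
  set c : Fin n → C(X, ℂ) := fun i => ⟨fun z => (z : Fin n → ℂ) i,
        (continuous_apply i).comp continuous_subtype_val⟩ with hc
  have hBX : BX X hX = ((MvPolynomial.aeval c).range).topologicalClosure := rfl
  haveI : CompleteSpace (BX X hX) := by
    rw [hBX]
    exact (Subalgebra.isClosed_topologicalClosure _).completeSpace_coe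
  have hle : (MvPolynomial.aeval c).range ≤ BX X hX := by
    rw [hBX]; exact Subalgebra.le_topologicalClosure _
  -- coordinate elements of BX
  set cA : Fin n → BX X hX := fun i => ⟨c i, hle ⟨MvPolynomial.X i, by simp⟩⟩ with hcA
  set Q : MvPolynomial (Fin n) ℂ →ₐ[ℂ] BX X hX := MvPolynomial.aeval cA with hQ
  have hQval : ∀ p, ((Q p : C(X, ℂ))) = MvPolynomial.aeval c p := by
    intro p
    have : (BX X hX).val.comp Q = MvPolynomial.aeval c := by
      rw [hQ, MvPolynomial.comp_aeval]; rfl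
    exact congrArg (fun F => F p) this ▸ rfl
  have hQeval : ∀ (p : MvPolynomial (Fin n) ℂ) (z : X),
      (Q p : C(X, ℂ)) z = MvPolynomial.eval (z : Fin n → ℂ) p := by
    intro p z
    rw [hQval]
    have : ((ContinuousMap.evalAlgHom ℂ ℂ z).comp (MvPolynomial.aeval c)) p
        = MvPolynomial.aeval (fun i => (c i) z) p := by
      rw [MvPolynomial.comp_aeval]; rfl
    simp [MvPolynomial.coe_aeval_eq_eval] at this; exact this
  -- the evaluation characters
  have hevalCont : ∀ z : X, Continuous fun f : BX X hX => (f : C(X, ℂ)) z :=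
    fun z => (continuous_eval_const z).comp continuous_subtype_val
  set ε : X → WeakDual.characterSpace ℂ (BX X hX) := fun z =>
    ⟨{ toFun := fun f : BX X hX => (f : C(X, ℂ)) z
       map_add' := fun f g => rfl
       map_smul' := fun r f => rfl
       cont := hevalCont z },
     by
      constructor
      · intro h
        have h1 : ((1 : BX X hX) : C(X, ℂ)) z = 0 := congrFun (congrArg DFunLike.coe h) 1
        simp at h1
      · intro f g; rfl⟩ with hε
  have hεapply : ∀ (z : X) (f : BX X hX), (ε z : WeakDual ℂ (BX X hX)) f = (f : C(X, ℂ)) z :=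
    fun z f => rfl
  -- continuity
  have hεcont : Continuous ε := by
    apply Continuous.subtype_mk
    apply WeakDual.continuous_of_continuous_eval
    intro f
    exact map_continuous (f : C(X, ℂ))
  -- injectivity
  have hinj : Function.Injective ε := by
    intro z w h
    ext i
    have h2 : (ε z : WeakDual ℂ (BX X hX)) (cA i) = (ε w : WeakDual ℂ (BX X hX)) (cA i) := by
      rw [h]
    simpa [hεapply, hcA, hc] using h2
  -- surjectivity
  have hsurj : Function.Surjective ε := by
    intro φ
    set w : Fin n → ℂ := fun i => φ (cA i) with hw
    have hφQ : ∀ p, φ (Q p) = MvPolynomial.eval w p := by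
      intro p
      have : ((WeakDual.CharacterSpace.toAlgHom φ).comp Q) p
          = MvPolynomial.aeval w p := by
        rw [hQ, MvPolynomial.comp_aeval]; rfl
      simpa [MvPolynomial.coe_aeval_eq_eval] using this
    have hwX : w ∈ X := by
      apply hpc
      intro p
      have h1 : ‖φ (Q p)‖ ≤ ‖Q p‖ * ‖(1 : BX X hX)‖ :=
        AlgHom.norm_apply_le_self_mul_norm_one φ (Q p)
      have h2 : ‖Q p‖ = ⨆ z : X, ‖MvPolynomial.eval (z : Fin n → ℂ) p‖ := by
        have : ‖Q p‖ = ‖(Q p : C(X, ℂ))‖ := rfl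
        rw [this, ContinuousMap.norm_eq_iSup_norm]
        exact iSup_congr fun z => by rw [hQeval]
      have h3 : ‖(1 : BX X hX)‖ ≤ 1 := by
        have : ‖(1 : BX X hX)‖ = ‖(1 : C(X, ℂ))‖ := rfl
        rw [this, ContinuousMap.norm_eq_iSup_norm]
        exact Real.iSup_le (fun z => by simp) zero_le_one
      have h4 : (0 : ℝ) ≤ ⨆ z : X, ‖MvPolynomial.eval (z : Fin n → ℂ) p‖ :=
        Real.iSup_nonneg fun z => norm_nonneg _
      calc ‖MvPolynomial.eval w p‖ = ‖φ (Q p)‖ := by rw [hφQ]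
        _ ≤ ‖Q p‖ * ‖(1 : BX X hX)‖ := h1
        _ ≤ (⨆ z : X, ‖MvPolynomial.eval (z : Fin n → ℂ) p‖) * 1 := by
            rw [h2]; exact mul_le_mul_of_nonneg_left h3 h4
        _ = _ := mul_one _
    refine ⟨⟨w, hwX⟩, ?_⟩
    -- the two characters agree on the dense range of Q
    have hdense : Dense (Set.range Q) := by
      rw [dense_iff_closure_eq]
      ext a
      simp only [Set.mem_univ, iff_true]
      rw [closure_subtype]
      have himg : Subtype.val '' Set.range Q = (((MvPolynomial.aeval c : MvPolynomial (Fin n) ℂ →ₐ[ℂ] C(X, ℂ)).range : Subalgebra ℂ C(X, ℂ)) : Set C(X, ℂ)) := by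
        ext f
        constructor
        · rintro ⟨g, ⟨p, rfl⟩, rfl⟩
          exact ⟨p, (hQval p).symm⟩
        · rintro ⟨p, rfl⟩
          exact ⟨Q p, ⟨p, rfl⟩, hQval p⟩
      rw [himg]
      have h5 : (a : C(X, ℂ)) ∈ ((MvPolynomial.aeval c : MvPolynomial (Fin n) ℂ →ₐ[ℂ] C(X, ℂ)).range).topologicalClosure := by
        rw [← hBX]; exact a.2
      exact h5
    have heq : (fun f : BX X hX => ((ε ⟨w, hwX⟩ : WeakDual ℂ (BX X hX))) f)
        = fun f => φ f := by
      apply Continuous.ext_on hdense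
      · exact hevalCont ⟨w, hwX⟩
      · exact map_continuous (WeakDual.CharacterSpace.toCLM φ)
      · rintro f ⟨p, rfl⟩
        show ((Q p : C(X, ℂ))) ⟨w, hwX⟩ = φ (Q p)
        rw [hQeval]
        exact (hφQ p).symm
    ext f
    exact congrFun heq f
  -- assemble the homeomorphism
  let E : X ≃ WeakDual.characterSpace ℂ (BX X hX) := Equiv.ofBijective ε ⟨hinj, hsurj⟩
  exact ⟨hεcont.homeoOfEquivCompactToT2 (f := E), hεapply⟩
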